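/- Let v be a speed law with maximal speed V_max and let ℓ > 0. Fix n ≥ 1 and initial positions x^o_1, …, x^o_n ∈ ℝ with x^o_{α-1} − x^o_α ≥ ℓ for every α ∈ {2, …, n}. Then the Follow-the-Leader Cauchy problem ẋ_1(t) = V_max, ẋ_α(t) = F(x_{α-1}(t) − x_α(t)) for α ∈ {2, …, n}, x_α(0) = x^o_α, where F(Δ) = v(ℓ/Δ) for Δ > 0 and F(Δ) = 0 for Δ ≤ 0, admits a unique continuously differentiable solution x : [0, ∞) → ℝⁿ. -/

import Mathlib

/-- A speed law: Lipschitz with constant `K`, valued in `[0, Vmax]` on `[0,∞)`,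
(weakly) decreasing, and vanishing for densities `ρ ≥ 1`. -/
def IsSpeedLaw (v : ℝ → ℝ) (K Vmax : ℝ) : Prop :=
  0 < Vmax ∧
  (∀ a b : ℝ, |v a - v b| ≤ K * |a - b|) ∧
  (∀ a b : ℝ, a ≤ b → v b ≤ v a) ∧
  (∀ ρ : ℝ, 0 ≤ ρ → 0 ≤ v ρ ∧ v ρ ≤ Vmax) ∧
  (∀ ρ : ℝ, 1 ≤ ρ → v ρ = 0)

/-- The Follow-the-Leader speed as a function of the headway `Δ`:
`F Δ = v (ℓ / Δ)` for `Δ > 0`, and `F Δ = 0` for `Δ ≤ 0`. -/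
noncomputable def FtLSpeed (v : ℝ → ℝ) (ℓ Δ : ℝ) : ℝ :=
  if 0 < Δ then v (ℓ / Δ) else 0

/-- The index of the vehicle immediately in front of vehicle `α` (for `α.val > 0`). -/
def predIdx {n : ℕ} (α : Fin n) : Fin n :=
  ⟨α.val - 1, Nat.lt_of_le_of_lt (Nat.sub_le _ _) α.isLt⟩

/-- `x : ℝ → Fin n → ℝ` solves the Follow-the-Leader system on `[0, ∞)`:
the leader (index `0`) drives at speed `Vmax`, and each follower `α` drives at
speed `FtLSpeed v ℓ (x (α-1) - x α)`. -/
def IsFtLSolution (v : ℝ → ℝ) (Vmax ℓ : ℝ) {n : ℕ} (hn : 0 < n)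
    (x : ℝ → Fin n → ℝ) : Prop :=
  ∀ t ∈ Set.Ici (0 : ℝ),
    HasDerivWithinAt (fun s => x s ⟨0, hn⟩) Vmax (Set.Ici 0) t ∧
    ∀ α : Fin n, 0 < α.val →
      HasDerivWithinAt (fun s => x s α)
        (FtLSpeed v ℓ (x t (predIdx α) - x t α)) (Set.Ici 0) t


open Set Filter Topology

section Helpers
variable {v : ℝ → ℝ} {K Vmax ℓ : ℝ}

lemma speedlaw_K_nonneg (hv : IsSpeedLaw v K Vmax) : 0 ≤ K := by
  have h := hv.2.1 0 1
  simp only [zero_sub, abs_neg, abs_one, mul_one] at h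
  exact le_trans (abs_nonneg _) h

lemma FtLSpeed_eq_zero (hℓ : 0 < ℓ) (hv : IsSpeedLaw v K Vmax) {Δ : ℝ} (h : Δ ≤ ℓ) :
    FtLSpeed v ℓ Δ = 0 := by
  unfold FtLSpeed
  split_ifs with h1
  · exact hv.2.2.2.2 _ ((one_le_div h1).2 h)
  · rfl

lemma FtLSpeed_nonneg (hℓ : 0 < ℓ) (hv : IsSpeedLaw v K Vmax) (Δ : ℝ) :
    0 ≤ FtLSpeed v ℓ Δ := by
  unfold FtLSpeed
  split_ifs with h1
  · exact (hv.2.2.2.1 _ (div_pos hℓ h1).le).1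
  · exact le_refl _

lemma FtLSpeed_le (hℓ : 0 < ℓ) (hv : IsSpeedLaw v K Vmax) (Δ : ℝ) :
    FtLSpeed v ℓ Δ ≤ Vmax := by
  unfold FtLSpeed
  split_ifs with h1
  · exact (hv.2.2.2.1 _ (div_pos hℓ h1).le).2
  · exact hv.1.le

lemma FtLSpeed_lip (hℓ : 0 < ℓ) (hv : IsSpeedLaw v K Vmax) (a b : ℝ) :
    |FtLSpeed v ℓ a - FtLSpeed v ℓ b| ≤ (K / ℓ) * |a - b| := by
  have hK := speedlaw_K_nonneg hv
  wlog hab : b ≤ a generalizing a b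
  · rw [abs_sub_comm, abs_sub_comm a b]; exact this b a (le_of_not_ge hab)
  rcases le_or_gt a ℓ with ha | ha
  · rw [FtLSpeed_eq_zero hℓ hv ha, FtLSpeed_eq_zero hℓ hv (hab.trans ha), sub_self, abs_zero]
    positivity
  · set b' := max b ℓ with hb'def
    have hb'ℓ : ℓ ≤ b' := le_max_right _ _
    have hb'a : b' ≤ a := max_le hab ha.le
    have hbb' : b ≤ b' := le_max_left _ _
    have hFb : FtLSpeed v ℓ b = FtLSpeed v ℓ b' := by
      rcases le_or_gt b ℓ with h | h
      · have h1 : b' = ℓ := by rw [hb'def]; exact max_eq_right h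
        rw [FtLSpeed_eq_zero hℓ hv h, h1, FtLSpeed_eq_zero hℓ hv le_rfl]
      · have h1 : b' = b := by rw [hb'def]; exact max_eq_left h.le
        rw [h1]
    have ha0 : 0 < a := hℓ.trans ha
    have hb'0 : 0 < b' := lt_of_lt_of_le hℓ hb'ℓ
    rw [hFb]
    have hFa : FtLSpeed v ℓ a = v (ℓ / a) := if_pos ha0
    have hFb' : FtLSpeed v ℓ b' = v (ℓ / b') := if_pos hb'0
    rw [hFa, hFb']
    calc |v (ℓ / a) - v (ℓ / b')| ≤ K * |ℓ / a - ℓ / b'| := hv.2.1 _ _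
      _ = K * (ℓ * (a - b') / (b' * a)) := by
          rw [abs_of_nonpos (by
            apply sub_nonpos.2
            exact div_le_div_of_nonneg_left hℓ.le hb'0 hb'a |>.trans_eq rfl)]
          congr 1
          field_simp
          ring
      _ ≤ (K / ℓ) * (a - b') := by
          rw [div_mul_eq_mul_div, mul_div_assoc, mul_div_assoc]
          apply mul_le_mul_of_nonneg_left _ hK
          rw [mul_div_assoc', div_le_div_iff₀ (by positivity) hℓ]
          nlinarith [sub_nonneg.2 hb'a, mul_le_mul hb'ℓ ha.le hℓ.le (le_of_lt hb'0)]
      _ ≤ (K / ℓ) * |a - b| := by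
          apply mul_le_mul_of_nonneg_left _ (by positivity)
          rw [abs_of_nonneg (sub_nonneg.2 hab)]
          linarith

lemma FtLSpeed_lipschitzWith (hℓ : 0 < ℓ) (hv : IsSpeedLaw v K Vmax) :
    LipschitzWith (Real.toNNReal (K / ℓ)) (FtLSpeed v ℓ) := by
  have hK := speedlaw_K_nonneg hv
  rw [lipschitzWith_iff_dist_le_mul]
  intro a b
  rw [Real.dist_eq, Real.dist_eq, Real.coe_toNNReal _ (by positivity)]
  exact FtLSpeed_lip hℓ hv a b

lemma shifted_lip (hℓ : 0 < ℓ) (hv : IsSpeedLaw v K Vmax) (c : ℝ) :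
    LipschitzWith (Real.toNNReal (K / ℓ)) (fun x : ℝ => FtLSpeed v ℓ (c - x)) := by
  have hK := speedlaw_K_nonneg hv
  rw [lipschitzWith_iff_dist_le_mul]
  intro a b
  rw [Real.dist_eq, Real.dist_eq, Real.coe_toNNReal _ (by positivity)]
  have h := FtLSpeed_lip hℓ hv (c - a) (c - b)
  have : |(c - a) - (c - b)| = |a - b| := by rw [abs_sub_comm]; ring_nf
  rwa [this] at h


lemma scalar_unique (hℓ : 0 < ℓ) (hv : IsSpeedLaw v K Vmax) (g u w : ℝ → ℝ)
    (hu : ∀ t ∈ Ici (0:ℝ), HasDerivWithinAt u (FtLSpeed v ℓ (g t - u t)) (Ici 0) t)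
    (hw : ∀ t ∈ Ici (0:ℝ), HasDerivWithinAt w (FtLSpeed v ℓ (g t - w t)) (Ici 0) t)
    (h0 : u 0 = w 0) : ∀ t ∈ Ici (0:ℝ), u t = w t := by
  intro t ht
  have key := ODE_solution_unique (v := fun s x => FtLSpeed v ℓ (g s - x))
    (K := Real.toNNReal (K / ℓ)) (f := u) (g := w) (a := 0) (b := t)
    (fun s => shifted_lip hℓ hv (g s))
    (fun s hs => ((hu s hs.1).continuousWithinAt).mono (fun z hz => hz.1))
    (fun s hs => (hu s hs.1).mono (Ici_subset_Ici.2 hs.1))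
    (fun s hs => ((hw s hs.1).continuousWithinAt).mono (fun z hz => hz.1))
    (fun s hs => (hw s hs.1).mono (Ici_subset_Ici.2 hs.1))
    h0
  exact key ⟨ht, le_rfl⟩

lemma leader_unique {c : ℝ} (f : ℝ → ℝ)
    (hf : ∀ t ∈ Ici (0:ℝ), HasDerivWithinAt f Vmax (Ici 0) t) (h0 : f 0 = c) :
    ∀ t ∈ Ici (0:ℝ), f t = c + Vmax * t := by
  have hw : ∀ t ∈ Ici (0:ℝ), HasDerivWithinAt (fun s => c + Vmax * s) Vmax (Ici 0) t := by
    intro t _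
    simpa using (((hasDerivAt_id t).const_mul Vmax).const_add c).hasDerivWithinAt
  intro t ht
  have key := ODE_solution_unique (v := fun _ _ => Vmax) (K := 0) (f := f)
    (g := fun s => c + Vmax * s) (a := 0) (b := t)
    (fun _ => LipschitzWith.const Vmax)
    (fun s hs => ((hf s hs.1).continuousWithinAt).mono (fun z hz => hz.1))
    (fun s hs => (hf s hs.1).mono (Ici_subset_Ici.2 hs.1))
    (fun s hs => ((hw s hs.1).continuousWithinAt).mono (fun z hz => hz.1))
    (fun s hs => (hw s hs.1).mono (Ici_subset_Ici.2 hs.1))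
    (by simpa using h0)
  exact key ⟨ht, le_rfl⟩

lemma scalar_exists (hℓ : 0 < ℓ) (hv : IsSpeedLaw v K Vmax) (g : ℝ → ℝ)
    (hg : ContinuousOn g (Ici 0)) (u0 : ℝ) :
    ∃ u : ℝ → ℝ, u 0 = u0 ∧
      ∀ t ∈ Ici (0:ℝ), HasDerivWithinAt u (FtLSpeed v ℓ (g t - u t)) (Ici 0) t := by
  have hK := speedlaw_K_nonneg hv
  set L : NNReal := Real.toNNReal (K / ℓ) with hL
  have hsolN : ∀ N : ℕ, ∃ f : ℝ → ℝ, f 0 = u0 ∧ ∀ t ∈ Icc (0:ℝ) (N+1),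
      HasDerivWithinAt f (FtLSpeed v ℓ (g t - f t)) (Icc 0 (N+1)) t := by
    intro N
    have hT : (0:ℝ) < N + 1 := by positivity
    have hpl : IsPicardLindelof (fun t x => FtLSpeed v ℓ (g t - x)) (tmin := 0) (tmax := N+1)
        ⟨0, le_rfl, hT.le⟩ u0 (Real.toNNReal (Vmax * (N+1))) 0 (Real.toNNReal Vmax) L :=
      { lipschitzOnWith := fun t _ => (shifted_lip hℓ hv (g t)).lipschitzOnWith
        continuousOn := fun x _ => (FtLSpeed_lipschitzWith hℓ hv).continuous.comp_continuousOn
          (((hg.mono (fun z (hz : z ∈ Icc (0:ℝ) (N+1)) => hz.1)).sub continuousOn_const))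
        norm_le := fun t _ x _ => by
          rw [Real.norm_eq_abs, abs_of_nonneg (FtLSpeed_nonneg hℓ hv _), Real.coe_toNNReal _ hv.1.le]
          exact FtLSpeed_le hℓ hv _
        mul_max_le := by
          simp only [NNReal.coe_zero, sub_zero, max_eq_left hT.le, Real.coe_toNNReal _ hv.1.le,
            Real.coe_toNNReal _ (mul_nonneg hv.1.le hT.le), le_refl] }
    exact hpl.exists_eq_forall_mem_Icc_hasDerivWithinAt₀
  choose sol hsol0 hsolD using hsolN
  have agree : ∀ M N : ℕ, M ≤ N → EqOn (sol M) (sol N) (Icc 0 (M+1:ℝ)) := by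
    intro M N hMN
    have hMN' : (M:ℝ) + 1 ≤ (N:ℝ) + 1 := by
      have : (M:ℝ) ≤ N := Nat.cast_le.2 hMN
      linarith
    have memIcc : ∀ (P : ℕ) (s : ℝ), s ∈ Ico (0:ℝ) (M+1) → (M:ℝ)+1 ≤ (P:ℝ)+1 →
        Icc (0:ℝ) (P+1) ∈ 𝓝[Ici s] s := by
      intro P s hs hP
      refine mem_of_superset (inter_mem_nhdsWithin (Ici s) (Iio_mem_nhds (lt_of_lt_of_le hs.2 hP)))
        (fun z hz => ⟨hs.1.trans hz.1, hz.2.le⟩)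
    apply ODE_solution_unique (v := fun s x => FtLSpeed v ℓ (g s - x)) (K := L)
      (fun s => shifted_lip hℓ hv (g s))
    · exact fun s hs => (hsolD M s hs).continuousWithinAt
    · intro s hs
      exact (hsolD M s ⟨hs.1, hs.2.le⟩).mono_of_mem_nhdsWithin (memIcc M s hs le_rfl)
    · exact fun s hs => (hsolD N s ⟨hs.1, hs.2.trans hMN'⟩).continuousWithinAt.mono
        (Icc_subset_Icc le_rfl hMN')
    · intro s hs
      exact (hsolD N s ⟨hs.1, hs.2.le.trans hMN'⟩).mono_of_mem_nhdsWithin (memIcc N s hs hMN')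
    · rw [hsol0 M, hsol0 N]
  refine ⟨fun t => sol ⌈t⌉₊ t, ?_, ?_⟩
  · show sol ⌈(0:ℝ)⌉₊ 0 = u0
    rw [Nat.ceil_zero, hsol0]
  · have key : ∀ N : ℕ, ∀ t ∈ Icc (0:ℝ) (N+1), sol ⌈t⌉₊ t = sol N t := by
      intro N t ht
      rcases le_total ⌈t⌉₊ N with h | h
      · exact agree _ N h ⟨ht.1, (Nat.le_ceil t).trans (by linarith [Nat.le_ceil t])⟩
      · exact (agree N _ h ht).symm
    intro t ht
    set N := ⌈t⌉₊ with hN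
    have htN : t ≤ (N:ℝ) := Nat.le_ceil t
    have ht1 : t < (N:ℝ) + 1 := by linarith
    have htIcc : t ∈ Icc (0:ℝ) (N+1) := ⟨ht, ht1.le⟩
    have hmem : Icc (0:ℝ) (N+1) ∈ 𝓝[Ici 0] t :=
      mem_of_superset (inter_mem_nhdsWithin (Ici 0) (Iio_mem_nhds ht1))
        (fun z hz => ⟨hz.1, hz.2.le⟩)
    have hd := (hsolD N t htIcc).mono_of_mem_nhdsWithin hmem
    have heq : (fun s => sol ⌈s⌉₊ s) =ᶠ[𝓝[Ici 0] t] sol N :=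
      Filter.eventuallyEq_of_mem hmem (fun s hs => key N s hs)
    have hut : sol ⌈t⌉₊ t = sol N t := key N t htIcc
    have := hd.congr_of_eventuallyEq heq hut
    rwa [show FtLSpeed v ℓ (g t - sol ⌈t⌉₊ t) = FtLSpeed v ℓ (g t - sol N t) by rw [hut]]

end Helpers

open Classical in
noncomputable def trajAux (v : ℝ → ℝ) (K Vmax ℓ : ℝ) (hℓ : 0 < ℓ) (hv : IsSpeedLaw v K Vmax)
    (lead : ℝ → ℝ) (u0 : ℕ → ℝ) : ℕ → ℝ → ℝ
  | 0 => lead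
  | (k+1) =>
    if h : ContinuousOn (trajAux v K Vmax ℓ hℓ hv lead u0 k) (Ici 0) then
      Classical.choose (scalar_exists hℓ hv _ h (u0 (k+1)))
    else fun _ => 0

lemma trajAux_cont {v : ℝ → ℝ} {K Vmax ℓ : ℝ} (hℓ : 0 < ℓ) (hv : IsSpeedLaw v K Vmax)
    (lead : ℝ → ℝ) (u0 : ℕ → ℝ) (hlead : ContinuousOn lead (Ici 0)) (k : ℕ) :
    ContinuousOn (trajAux v K Vmax ℓ hℓ hv lead u0 k) (Ici 0) := by
  induction k with
  | zero => exact hlead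
  | succ k ih =>
    have hs := Classical.choose_spec (scalar_exists hℓ hv _ ih (u0 (k+1)))
    have heq : trajAux v K Vmax ℓ hℓ hv lead u0 (k+1)
        = Classical.choose (scalar_exists hℓ hv _ ih (u0 (k+1))) := by
      simp only [trajAux]; rw [dif_pos ih]
    rw [heq]
    exact fun t ht => (hs.2 t ht).continuousWithinAt

lemma trajAux_succ {v : ℝ → ℝ} {K Vmax ℓ : ℝ} (hℓ : 0 < ℓ) (hv : IsSpeedLaw v K Vmax)
    (lead : ℝ → ℝ) (u0 : ℕ → ℝ) (hlead : ContinuousOn lead (Ici 0)) (k : ℕ) :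
    trajAux v K Vmax ℓ hℓ hv lead u0 (k+1) 0 = u0 (k+1) ∧
    ∀ t ∈ Ici (0:ℝ), HasDerivWithinAt (trajAux v K Vmax ℓ hℓ hv lead u0 (k+1))
      (FtLSpeed v ℓ (trajAux v K Vmax ℓ hℓ hv lead u0 k t
        - trajAux v K Vmax ℓ hℓ hv lead u0 (k+1) t)) (Ici 0) t := by
  have h := trajAux_cont hℓ hv lead u0 hlead k
  have heq : trajAux v K Vmax ℓ hℓ hv lead u0 (k+1)
      = Classical.choose (scalar_exists hℓ hv _ h (u0 (k+1))) := by
    simp only [trajAux]; rw [dif_pos h]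
  rw [heq]
  exact Classical.choose_spec (scalar_exists hℓ hv _ h (u0 (k+1)))

lemma trajAux_zero {v : ℝ → ℝ} {K Vmax ℓ : ℝ} (hℓ : 0 < ℓ) (hv : IsSpeedLaw v K Vmax)
    (lead : ℝ → ℝ) (u0 : ℕ → ℝ) : trajAux v K Vmax ℓ hℓ hv lead u0 0 = lead := by
  simp only [trajAux]



theorem stmt1 (v : ℝ → ℝ) (K Vmax ℓ : ℝ) (hℓ : 0 < ℓ)
    (hv : IsSpeedLaw v K Vmax)
    (n : ℕ) (hn : 0 < n) (x0 : Fin n → ℝ)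
    (hspacing : ∀ α : Fin n, 0 < α.val → x0 (predIdx α) - x0 α ≥ ℓ) :
    ∃ x : ℝ → Fin n → ℝ,
      ((∀ α, x 0 α = x0 α) ∧ IsFtLSolution v Vmax ℓ hn x) ∧
      ∀ y : ℝ → Fin n → ℝ,
        ((∀ α, y 0 α = x0 α) ∧ IsFtLSolution v Vmax ℓ hn y) →
        ∀ t ∈ Set.Ici (0 : ℝ), y t = x t := by
  classical
  set lead : ℝ → ℝ := fun t => x0 ⟨0, hn⟩ + Vmax * t with hlead_def
  have hlead : ContinuousOn lead (Ici 0) :=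
    (continuous_const.add (continuous_const.mul continuous_id)).continuousOn
  set u0 : ℕ → ℝ := fun k => if hk : k < n then x0 ⟨k, hk⟩ else 0 with hu0
  set T : ℕ → ℝ → ℝ := trajAux v K Vmax ℓ hℓ hv lead u0 with hT
  have hsucc := fun k => trajAux_succ hℓ hv lead u0 hlead k
  have hT0 : T 0 = lead := trajAux_zero hℓ hv lead u0
  have hleadD : ∀ t ∈ Ici (0:ℝ), HasDerivWithinAt (T 0) Vmax (Ici 0) t := by
    intro t _
    rw [hT0, hlead_def]
    simpa using (((hasDerivAt_id t).const_mul Vmax).const_add (x0 ⟨0, hn⟩)).hasDerivWithinAt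
  have hinit : ∀ α : Fin n, T α.val 0 = x0 α := by
    rintro ⟨av, hav⟩
    cases av with
    | zero =>
      show T 0 0 = x0 ⟨0, hav⟩
      rw [hT0, hlead_def]
      simp
    | succ k =>
      show T (k+1) 0 = x0 ⟨k+1, hav⟩
      have h1 : T (k+1) 0 = u0 (k+1) := (hsucc k).1
      rw [h1, hu0]
      simp only [dif_pos hav]
  refine ⟨fun t α => T α.val t, ⟨fun α => hinit α, ?_⟩, ?_⟩
  · -- IsFtLSolution
    intro t ht
    refine ⟨hleadD t ht, ?_⟩
    rintro ⟨av, hav⟩ hpos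
    cases av with
    | zero => exact absurd hpos (lt_irrefl 0)
    | succ k =>
      exact (hsucc k).2 t ht
  · -- uniqueness
    rintro y ⟨hy0, hysol⟩ t ht
    have main : ∀ k, ∀ hk : k < n, ∀ s ∈ Ici (0:ℝ), y s ⟨k, hk⟩ = T k s := by
      intro k
      induction k with
      | zero =>
        intro hk s hs
        have h := leader_unique (c := x0 ⟨0, hn⟩) (fun r => y r ⟨0, hk⟩)
          (fun r hr => (hysol r hr).1) (hy0 ⟨0, hk⟩)
        rw [hT0, hlead_def]
        exact h s hs
      | succ k ih =>
        intro hk s hs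
        have hk' : k < n := Nat.lt_of_succ_lt hk
        have ihh := ih hk'
        have hyd : ∀ r ∈ Ici (0:ℝ), HasDerivWithinAt (fun q => y q ⟨k+1, hk⟩)
            (FtLSpeed v ℓ (T k r - y r ⟨k+1, hk⟩)) (Ici 0) r := by
          intro r hr
          have h := (hysol r hr).2 ⟨k+1, hk⟩ (Nat.succ_pos k)
          rwa [show y r (predIdx ⟨k+1, hk⟩) = T k r from ihh r hr] at h
        have h0 : y 0 ⟨k+1, hk⟩ = T (k+1) 0 := by
          rw [hy0 ⟨k+1, hk⟩, hinit ⟨k+1, hk⟩]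
        exact scalar_unique hℓ hv (T k) _ _ hyd (fun r hr => (hsucc k).2 r hr) h0 s hs
    funext α
    exact main α.val α.isLt t ht
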